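/- For every ν in the dual lattice N with ⟨ν, e_i⟩ > 0 for all 1 ≤ i ≤ d, and for every 1 ≤ k ≤ d, the vector w_k produced by the recursive algorithm belongs to the finite set J_k and computes the support function of the k-th logarithmic jacobian ideal at ν, that is, ⟨ν, w_k⟩ = ord_{J_k}(ν) = min_{w ∈ J_k} ⟨ν, w⟩. -/

import Mathlib

open scoped BigOperators Classical

namespace QO

/-- The standard pairing `⟨ν, m⟩ = ∑ i, ν i * m i` on `ℚ^d`. -/
def pair (d : ℕ) (ν m : Fin d → ℚ) : ℚ := ∑ i, ν i * m i

/-- `E d lam i` is the `i`-th standard basis vector of `ℚ^d` for `1 ≤ i ≤ d`,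
and equals the characteristic exponent `λ_{i-d}` for `d + 1 ≤ i` (1-based indexing). -/
def E (d : ℕ) (lam : ℕ → Fin d → ℚ) (i : ℕ) : Fin d → ℚ :=
  if 1 ≤ i ∧ i ≤ d then (fun j => if (j : ℕ) = i - 1 then 1 else 0) else lam (i - d)

/-- The lattice `M_j = ℤ^d + ℤλ_1 + ⋯ + ℤλ_j`, as an additive subgroup of `ℚ^d`. -/
def Mlat (d : ℕ) (lam : ℕ → Fin d → ℚ) : ℕ → AddSubgroup (Fin d → ℚ)
  | 0 => AddSubgroup.closure (Set.range fun i : Fin d => (fun j => if j = i then (1 : ℚ) else 0))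
  | (j + 1) => Mlat d lam j ⊔ AddSubgroup.closure {lam (j + 1)}

/-- The dual lattice `N` of `M = M_g`. -/
def Ndual (d g : ℕ) (lam : ℕ → Fin d → ℚ) : Set (Fin d → ℚ) :=
  { ν | ∀ m ∈ Mlat d lam g, ∃ z : ℤ, pair d ν m = (z : ℚ) }

/-- Admissible index sets for `J_k`: `k` indices in `{1, …, d+g}`, at most one of which
exceeds `d`, whose associated vectors are linearly independent over `ℚ`. -/
def IdxOk (d g : ℕ) (lam : ℕ → Fin d → ℚ) (k : ℕ) (I : Finset ℕ) : Prop :=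
  I.card = k ∧ I ⊆ Finset.Icc 1 (d + g) ∧ (I.filter fun i => d + 1 ≤ i).card ≤ 1 ∧
    LinearIndependent ℚ (fun i : {x // x ∈ I} => E d lam i.1)

/-- The set `J_k` of sums `e_{j_1} + ⋯ + e_{j_k}`. -/
def Jset (d g : ℕ) (lam : ℕ → Fin d → ℚ) (k : ℕ) : Set (Fin d → ℚ) :=
  { w | ∃ I : Finset ℕ, IdxOk d g lam k I ∧ w = ∑ i ∈ I, E d lam i }

/-- The set `J_k`, as a finite set. -/
noncomputable def Jfin (d g : ℕ) (lam : ℕ → Fin d → ℚ) (k : ℕ) : Finset (Fin d → ℚ) :=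
  ((Finset.Icc 1 (d + g)).powerset.filter fun I => IdxOk d g lam k I).image
    fun I => ∑ i ∈ I, E d lam i

/-- The support function `ord_{J_k}(ν) = min_{w ∈ J_k} ⟨ν, w⟩`. -/
noncomputable def ordJ (d g : ℕ) (lam : ℕ → Fin d → ℚ) (k : ℕ) (ν : Fin d → ℚ) : ℚ :=
  if h : (Jfin d g lam k).Nonempty then ((Jfin d g lam k).image (pair d ν)).min' (h.image _)
  else 0

/-- `φ_k(ν) = ord_{J_k}(ν) - ord_{J_{k-1}}(ν)` (note `ord_{J_0} = 0`, hence also `φ_0 = 0`). -/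
noncomputable def phiJ (d g : ℕ) (lam : ℕ → Fin d → ℚ) (k : ℕ) (ν : Fin d → ℚ) : ℚ :=
  ordJ d g lam k ν - ordJ d g lam (k - 1) ν

/-- The sort key of the total order `≤_ν` on the indices `1, …, d+g`: sort by the value
`⟨ν, ·⟩`, breaking ties (in particular ties between an `e_i` with `i ≤ d` and a `λ_j`)
by the index, so that `e_i` is placed first. -/
noncomputable def keyIdx (d : ℕ) (lam : ℕ → Fin d → ℚ) (ν : Fin d → ℚ) (i : ℕ) : ℚ ×ₗ ℕ :=
  toLex (pair d ν (E d lam i), i)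

/-- The `≤_ν`-least element of a finite set of indices. -/
noncomputable def leastIdx (d : ℕ) (lam : ℕ → Fin d → ℚ) (ν : Fin d → ℚ) (S : Finset ℕ) : ℕ :=
  if h : S.Nonempty then (ofLex ((S.image (keyIdx d lam ν)).min' (h.image _))).2 else 0

/-- The `≤_ν`-greatest element of a finite set of indices. -/
noncomputable def greatestIdx (d : ℕ) (lam : ℕ → Fin d → ℚ) (ν : Fin d → ℚ)
    (S : Finset ℕ) : ℕ :=
  if h : S.Nonempty then (ofLex ((S.image (keyIdx d lam ν)).max' (h.image _))).2 else 0

/-- The `ℚ`-span of the vectors indexed by `I`. -/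
def spanOf (d : ℕ) (lam : ℕ → Fin d → ℚ) (I : Finset ℕ) : Submodule ℚ (Fin d → ℚ) :=
  Submodule.span ℚ ((fun i => E d lam i) '' (I : Set ℕ))

/-- `n(k)`: the index `n` such that `λ_n` is a summand of `w_k`, and `0` if there is none. -/
noncomputable def nVal (d : ℕ) (I : Finset ℕ) : ℕ :=
  if h : (I.filter fun i => d + 1 ≤ i).Nonempty then (I.filter fun i => d + 1 ≤ i).min' h - d
  else 0

/-- `t(k)`: the least `1 ≤ j ≤ g` with `λ_j ∉ ℓ_k(ν)`, and `g + 1` if there is none. -/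
noncomputable def tVal (d g : ℕ) (lam : ℕ → Fin d → ℚ) (I : Finset ℕ) : ℕ :=
  if h : ((Finset.Icc 1 g).filter fun j => lam j ∉ spanOf d lam I).Nonempty then
    ((Finset.Icc 1 g).filter fun j => lam j ∉ spanOf d lam I).min' h
  else g + 1

/-- `m(k)`: the index `m` with `({e_1, …, e_d} ∩ ℓ_k(ν)) ∖ {summands of w_k} = {e_m}`,
and `0` if this set is empty. -/
noncomputable def mVal (d : ℕ) (lam : ℕ → Fin d → ℚ) (I : Finset ℕ) : ℕ :=
  if h : (((Finset.Icc 1 d).filter fun i => E d lam i ∈ spanOf d lam I) \ I).Nonempty then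
    (((Finset.Icc 1 d).filter fun i => E d lam i ∈ spanOf d lam I) \ I).min' h
  else 0

/-- `i(k)`: the `≤_ν`-least index `1 ≤ i ≤ d + g` with `w_k + e_i ∈ J_{k+1}`. -/
noncomputable def iVal (d g : ℕ) (lam : ℕ → Fin d → ℚ) (ν : Fin d → ℚ) (k : ℕ)
    (I : Finset ℕ) : ℕ :=
  leastIdx d lam ν ((Finset.Icc 1 (d + g)).filter fun i => IdxOk d g lam (k + 1) (insert i I))

/-- One step of the algorithm, from the summands of `w_k` to the summands of `w_{k+1}`:
`a_{k+1} = w_k + e_{i(k)}` and `b_{k+1} = w_k - λ_{n(k)} + λ_{t(k)} + e_{m(k)}`; the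
candidate `b_{k+1}` is discarded when `m(k) = 0` or `t(k) = g + 1`, and otherwise
`w_{k+1} = a_{k+1}` exactly when `⟨ν, a_{k+1}⟩ ≤ ⟨ν, b_{k+1}⟩`. -/
noncomputable def step (d g : ℕ) (lam : ℕ → Fin d → ℚ) (ν : Fin d → ℚ) (k : ℕ)
    (I : Finset ℕ) : Finset ℕ :=
  let a : Finset ℕ := insert (iVal d g lam ν k I) I
  let b : Finset ℕ :=
    insert (mVal d lam I) (insert (d + tVal d g lam I)
      (if nVal d I = 0 then I else I.erase (d + nVal d I)))
  if mVal d lam I = 0 ∨ tVal d g lam I = g + 1 then a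
  else if pair d ν (∑ i ∈ a, E d lam i) ≤ pair d ν (∑ i ∈ b, E d lam i) then a else b

/-- The index sets `W ν k` of summands of the algorithm's vectors `w_k`; the vector `w_1`
is the `≤_ν`-least element of `{e_1, …, e_d, λ_1}`. -/
noncomputable def W (d g : ℕ) (lam : ℕ → Fin d → ℚ) (ν : Fin d → ℚ) : ℕ → Finset ℕ
  | 0 => ∅
  | 1 => {leastIdx d lam ν (insert (d + 1) (Finset.Icc 1 d))}
  | (k + 2) => step d g lam ν (k + 1) (W d g lam ν (k + 1))

/-- The algorithm's vector `w_k`. -/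
noncomputable def wVec (d g : ℕ) (lam : ℕ → Fin d → ℚ) (ν : Fin d → ℚ) (k : ℕ) :
    Fin d → ℚ :=
  ∑ i ∈ W d g lam ν k, E d lam i

/-- `ℓ_k(ν)`: the `ℚ`-span of the summands of `w_k`. -/
noncomputable def ellK (d g : ℕ) (lam : ℕ → Fin d → ℚ) (ν : Fin d → ℚ) (k : ℕ) :
    Submodule ℚ (Fin d → ℚ) :=
  spanOf d lam (W d g lam ν k)

/-- `ℓ_ν^s = span_ℚ{e_j : 1 ≤ j < d + t(k), ⟨ν, e_j⟩ ≤ s}`, where `k` is the index with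
`φ_k(ν) ≤ s < φ_{k+1}(ν)`. -/
noncomputable def ellS (d g : ℕ) (lam : ℕ → Fin d → ℚ) (ν : Fin d → ℚ) (s : ℚ) (k : ℕ) :
    Submodule ℚ (Fin d → ℚ) :=
  Submodule.span ℚ ((fun i => E d lam i) ''
    { i : ℕ | 1 ≤ i ∧ i < d + tVal d g lam (W d g lam ν k) ∧ pair d ν (E d lam i) ≤ s })

/-- `p(k)` (with the convention `λ_0 = 0`). -/
noncomputable def pVal (d g : ℕ) (lam : ℕ → Fin d → ℚ) (ν : Fin d → ℚ) (s : ℚ)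
    (k : ℕ) : ℕ :=
  if nVal d (W d g lam ν k) = 0 then
    if h : ((Finset.Icc 0 g).filter fun j =>
        pair d ν (if j = 0 then (0 : Fin d → ℚ) else lam j) ≤ s).Nonempty then
      ((Finset.Icc 0 g).filter fun j =>
        pair d ν (if j = 0 then (0 : Fin d → ℚ) else lam j) ≤ s).max' h
    else 0
  else
    (insert (nVal d (W d g lam ν k))
      ((Finset.Ioo (nVal d (W d g lam ν k)) (tVal d g lam (W d g lam ν k))).filter fun j =>
        mVal d lam (W d g lam ν k) ≠ 0 ∧
          pair d ν (E d lam (mVal d lam (W d g lam ν k)) - lam (nVal d (W d g lam ν k)) + lam j)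
            ≤ s)).max' (Finset.insert_nonempty _ _)

/-- `q_η`: the index of the `≤_ν`-greatest element of `{e_1, …, e_d} ∩ ℓ(η)`, where
`ℓ(η) = span_ℚ{e_i : η_i ≠ 0}`. -/
noncomputable def qIdx (d : ℕ) (lam : ℕ → Fin d → ℚ) (ν η : Fin d → ℚ) : ℕ :=
  greatestIdx d lam ν ((Finset.Icc 1 d).filter fun i => pair d η (E d lam i) ≠ 0)

section Aux

open Finset Submodule

variable {d g : ℕ} {lam : ℕ → Fin d → ℚ} {ν : Fin d → ℚ}

theorem pair_sumE (ν : Fin d → ℚ) (I : Finset ℕ) :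
    pair d ν (∑ i ∈ I, E d lam i) = ∑ i ∈ I, pair d ν (E d lam i) := by
  unfold pair
  simp only [Finset.sum_apply, Finset.mul_sum]
  rw [Finset.sum_comm]

theorem E_e {i : ℕ} (h1 : 1 ≤ i) (h2 : i ≤ d) :
    E d lam i = fun j : Fin d => if (j : ℕ) = i - 1 then 1 else 0 := if_pos ⟨h1, h2⟩

theorem E_lam {j : ℕ} (hj : 1 ≤ j) : E d lam (d + j) = lam j := by
  unfold E
  rw [if_neg (by omega), show d + j - d = j by omega]

theorem pair_E_nu (ν : Fin d → ℚ) (c : Fin d) : pair d ν (E d lam ((c : ℕ) + 1)) = ν c := by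
  rw [E_e (by omega) (by omega)]
  unfold pair
  simp only [Nat.add_sub_cancel]
  have : ∀ j : Fin d, ((j : ℕ) = (c : ℕ)) = (j = c) := by
    intro j; simp [Fin.ext_iff]
  simp only [this, mul_ite, mul_one, mul_zero]
  simp

end Aux
section Aux2

open Finset Submodule

variable {d g : ℕ} {lam : ℕ → Fin d → ℚ} {ν : Fin d → ℚ}

theorem nu_pos (hpos : ∀ i, 1 ≤ i → i ≤ d → 0 < pair d ν (E d lam i)) (c : Fin d) :
    0 < ν c := by
  have := hpos ((c : ℕ) + 1) (by omega) (by omega)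
  rwa [pair_E_nu] at this

theorem lam_mono (hmono : ∀ j, 1 ≤ j → j < g → ∀ i, lam j i ≤ lam (j + 1) i)
    {j j' : ℕ} (hj : 1 ≤ j) (hjj' : j ≤ j') (hj'g : j' ≤ g) (c : Fin d) :
    lam j c ≤ lam j' c := by
  induction j', hjj' using Nat.le_induction with
  | base => exact le_refl _
  | succ n hn ih =>
      exact le_trans (ih (by omega)) (hmono n (by omega) (by omega) c)

theorem pair_lam_mono (hpos : ∀ i, 1 ≤ i → i ≤ d → 0 < pair d ν (E d lam i))
    (hmono : ∀ j, 1 ≤ j → j < g → ∀ i, lam j i ≤ lam (j + 1) i)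
    {j j' : ℕ} (hj : 1 ≤ j) (hjj' : j ≤ j') (hj'g : j' ≤ g) :
    pair d ν (lam j) ≤ pair d ν (lam j') := by
  unfold pair
  refine Finset.sum_le_sum fun c _ => ?_
  exact mul_le_mul_of_nonneg_left (lam_mono hmono hj hjj' hj'g c) (nu_pos hpos c).le

theorem Mlat_mono {j j' : ℕ} (h : j ≤ j') : Mlat d lam j ≤ Mlat d lam j' := by
  induction j', h using Nat.le_induction with
  | base => exact le_refl _
  | succ n hn ih => exact le_trans ih (by rw [Mlat]; exact le_sup_left)

theorem e_mem_Mlat0 {i : ℕ} (h1 : 1 ≤ i) (h2 : i ≤ d) :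
    E d lam i ∈ Mlat d lam 0 := by
  rw [Mlat]
  apply AddSubgroup.subset_closure
  refine ⟨⟨i - 1, by omega⟩, ?_⟩
  rw [E_e h1 h2]
  funext j
  simp [eq_comm, Fin.ext_iff]

theorem lam_mem_Mlat {j : ℕ} (hj : 1 ≤ j) : lam j ∈ Mlat d lam j := by
  obtain ⟨j, rfl⟩ := Nat.exists_eq_add_of_le hj
  rw [Nat.add_comm, Mlat]
  exact le_sup_right (a := Mlat d lam j) (AddSubgroup.subset_closure rfl)

theorem lam_ne_zero (hnotin : ∀ j, 1 ≤ j → j ≤ g → lam j ∉ Mlat d lam (j - 1))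
    {j : ℕ} (h1 : 1 ≤ j) (h2 : j ≤ g) : lam j ≠ 0 := by
  intro h
  exact hnotin j h1 h2 (h ▸ (Mlat d lam (j-1)).zero_mem)

end Aux2
section Aux3
set_option maxHeartbeats 1000000

open Finset Submodule

variable {d g : ℕ} {lam : ℕ → Fin d → ℚ} {ν : Fin d → ℚ}

/-- Sub-families of a linearly independent family over a finset are linearly independent. -/
theorem li_mono {I I' : Finset ℕ} (h : I' ⊆ I)
    (hli : LinearIndependent ℚ (fun i : {x // x ∈ I} => E d lam i.1)) :
    LinearIndependent ℚ (fun i : {x // x ∈ I'} => E d lam i.1) := by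
  have hinj : Function.Injective (fun x : {x // x ∈ I'} => (⟨x.1, h x.2⟩ : {x // x ∈ I})) := by
    intro a b hab
    simp only [Subtype.mk.injEq] at hab
    exact Subtype.ext hab
  exact hli.comp _ hinj

/-- A family of standard basis vectors indexed by a subset of `[1, d]` is linearly
independent. -/
theorem li_e_subset {S : Finset ℕ} (hS : S ⊆ Finset.Icc 1 d) :
    LinearIndependent ℚ (fun i : {x // x ∈ S} => E d lam i.1) := by
  have hb : ∀ x : {x // x ∈ S}, 1 ≤ x.1 ∧ x.1 ≤ d := by
    intro x; have := hS x.2; rw [Finset.mem_Icc] at this; exact this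
  have hφ : Function.Injective (fun x : {x // x ∈ S} => (⟨x.1 - 1, by
      have := hb x; omega⟩ : Fin d)) := by
    intro a b hab
    have h1 := hb a; have h2 := hb b
    have := congrArg Fin.val hab
    simp only at this
    exact Subtype.ext (by omega)
  have hli := (Pi.basisFun ℚ (Fin d)).linearIndependent.comp _ hφ
  have heq : (fun i : {x // x ∈ S} => E d lam i.1) =
      (⇑(Pi.basisFun ℚ (Fin d)) ∘ fun x : {x // x ∈ S} => (⟨x.1 - 1, by
        have := hb x; omega⟩ : Fin d)) := by
    funext x
    rw [Function.comp_apply, Pi.basisFun_apply, E_e (hb x).1 (hb x).2]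
    funext j
    rw [Pi.single_apply]
    by_cases hj : (j : ℕ) = x.1 - 1
    · rw [if_pos hj, if_pos (Fin.ext hj)]
    · rw [if_neg hj, if_neg (fun hc => hj (congrArg Fin.val hc))]
  rw [heq]
  exact hli

theorem li_insert {I : Finset ℕ} {x : ℕ} (hx : x ∉ I)
    (hli : LinearIndependent ℚ (fun i : {y // y ∈ I} => E d lam i.1))
    (hsp : E d lam x ∉ spanOf d lam I) :
    LinearIndependent ℚ (fun i : {y // y ∈ insert x I} => E d lam i.1) := by
  have hx' : x ∉ (I : Set ℕ) := hx
  have h2 : LinearIndependent ℚ (fun i : ↥(insert x (I : Set ℕ)) => E d lam i.1) :=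
    (linearIndepOn_insert (f := E d lam) hx').mpr ⟨hli, hsp⟩
  rw [← Finset.coe_insert] at h2
  exact h2

theorem li_not_mem_span {I : Finset ℕ} {x : ℕ} (hx : x ∉ I)
    (hli : LinearIndependent ℚ (fun i : {y // y ∈ insert x I} => E d lam i.1)) :
    E d lam x ∉ spanOf d lam I := by
  have hx' : x ∉ (I : Set ℕ) := hx
  have h2 : LinearIndependent ℚ (fun i : ↥(insert x (I : Set ℕ)) => E d lam i.1) := by
    rw [← Finset.coe_insert]; exact hli
  exact ((linearIndepOn_insert (f := E d lam) hx').mp h2).2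

theorem card_le_of_subset_span {X I : Finset ℕ}
    (hX : LinearIndependent ℚ (fun i : {x // x ∈ X} => E d lam i.1))
    (h : ∀ x ∈ X, E d lam x ∈ spanOf d lam I) : X.card ≤ I.card := by
  have h1 : Module.finrank ℚ
      (span ℚ (Set.range (fun i : {x // x ∈ X} => E d lam i.1))) = X.card := by
    rw [finrank_span_eq_card hX, Fintype.card_coe]
  have hle : span ℚ (Set.range (fun i : {x // x ∈ X} => E d lam i.1)) ≤ spanOf d lam I := by
    rw [span_le]
    rintro _ ⟨i, rfl⟩
    exact h i.1 i.2
  have h2 : Module.finrank ℚ (spanOf d lam I) ≤ I.card := by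
    have : spanOf d lam I = span ℚ ((I.image (E d lam) : Finset (Fin d → ℚ)) : Set (Fin d → ℚ)) := by
      rw [Finset.coe_image]; rfl
    rw [this]
    exact le_trans (finrank_span_finset_le_card (I.image (E d lam))) Finset.card_image_le
  have h3 := Submodule.finrank_mono hle
  omega

end Aux3
section Aux4
set_option maxHeartbeats 1000000

open Finset Submodule

variable {d g : ℕ} {lam : ℕ → Fin d → ℚ} {ν : Fin d → ℚ}

theorem leastIdx_spec {S : Finset ℕ} (h : S.Nonempty) :
    leastIdx d lam ν S ∈ S ∧
      ∀ x ∈ S, pair d ν (E d lam (leastIdx d lam ν S)) ≤ pair d ν (E d lam x) := by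
  rw [leastIdx, dif_pos h]
  obtain ⟨y, hy, hkey⟩ := Finset.mem_image.mp (Finset.min'_mem (S.image (keyIdx d lam ν))
    (h.image _))
  rw [← hkey]
  have hofLex : (ofLex (keyIdx d lam ν y)).2 = y := rfl
  rw [hofLex]
  refine ⟨hy, fun x hx => ?_⟩
  have hle : keyIdx d lam ν y ≤ keyIdx d lam ν x := by
    rw [hkey]
    exact Finset.min'_le _ _ (Finset.mem_image_of_mem _ hx)
  rcases Prod.Lex.le_iff.mp hle with h1 | h1
  · exact le_of_lt h1
  · exact le_of_eq h1.1

/-- Removing an element of a `J_{k+1}`-admissible set gives a `J_k`-admissible set. -/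
theorem idxok_erase {k : ℕ} {K : Finset ℕ} {x : ℕ} (hK : IdxOk d g lam (k + 1) K)
    (hx : x ∈ K) : IdxOk d g lam k (K.erase x) := by
  obtain ⟨hcard, hsub, hfil, hli⟩ := hK
  refine ⟨by rw [Finset.card_erase_of_mem hx, hcard]; omega, le_trans (Finset.erase_subset x K) hsub,
    le_trans (Finset.card_le_card (Finset.filter_subset_filter _ (Finset.erase_subset x K)))
      hfil, li_mono (Finset.erase_subset x K) hli⟩

/-- Inserting an index whose vector is outside the span gives an admissible set, provided the
`λ`-count stays at most one. -/
theorem idxok_insert {k : ℕ} {I : Finset ℕ} {x : ℕ} (hI : IdxOk d g lam k I)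
    (hxIcc : x ∈ Finset.Icc 1 (d + g)) (hsp : E d lam x ∉ spanOf d lam I)
    (hcnt : ((insert x I).filter fun i => d + 1 ≤ i).card ≤ 1) :
    IdxOk d g lam (k + 1) (insert x I) := by
  obtain ⟨hcard, hsub, hfil, hli⟩ := hI
  have hx : x ∉ I := fun hxI =>
    hsp (Submodule.subset_span (Set.mem_image_of_mem _ (Finset.mem_coe.mpr hxI)))
  exact ⟨by rw [Finset.card_insert_of_notMem hx, hcard], Finset.insert_subset hxIcc hsub,
    hcnt, li_insert hx hli hsp⟩

theorem val_eq_pair (I : Finset ℕ) :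
    ∑ i ∈ I, pair d ν (E d lam i) = pair d ν (∑ i ∈ I, E d lam i) := (pair_sumE ν I).symm

end Aux4
section Aux5
set_option maxHeartbeats 1000000

open Finset Submodule

variable {d g : ℕ} {lam : ℕ → Fin d → ℚ} {ν : Fin d → ℚ}

theorem spanOf_insert (x : ℕ) (I : Finset ℕ) :
    spanOf d lam (insert x I) =
      span ℚ (insert (E d lam x) ((fun i => E d lam i) '' (I : Set ℕ))) := by
  rw [spanOf, Finset.coe_insert, Set.image_insert_eq]

theorem mem_spanOf_of_mem {I : Finset ℕ} {i : ℕ} (hi : i ∈ I) :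
    E d lam i ∈ spanOf d lam I :=
  Submodule.subset_span (Set.mem_image_of_mem _ (Finset.mem_coe.mpr hi))

theorem spanOf_le_of_forall {I J : Finset ℕ} (h : ∀ i ∈ I, E d lam i ∈ spanOf d lam J) :
    spanOf d lam I ≤ spanOf d lam J := by
  rw [spanOf, span_le]
  rintro _ ⟨i, hi, rfl⟩
  exact h i (Finset.mem_coe.mp hi)

/-- If the `λ`-part of an admissible set is nonempty, it is the singleton `{d + nVal}`. -/
theorem lamPart_eq {k : ℕ} {I : Finset ℕ} (hI : IdxOk d g lam k I)
    (hne : (I.filter fun i => d + 1 ≤ i).Nonempty) :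
    1 ≤ nVal d I ∧ nVal d I ≤ g ∧ (I.filter fun i => d + 1 ≤ i) = {d + nVal d I} := by
  obtain ⟨hcard, hsub, hfil, hli⟩ := hI
  have hc1 : (I.filter fun i => d + 1 ≤ i).card = 1 :=
    le_antisymm hfil (Finset.card_pos.mpr hne)
  obtain ⟨a, ha⟩ := Finset.card_eq_one.mp hc1
  have haf : a ∈ I.filter fun i => d + 1 ≤ i := ha ▸ Finset.mem_singleton_self a
  rw [Finset.mem_filter] at haf
  have hale : a ≤ d + g := (Finset.mem_Icc.mp (hsub haf.1)).2
  have hmin : (I.filter fun i => d + 1 ≤ i).min' hne = a := by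
    apply le_antisymm
    · exact Finset.min'_le _ _ (Finset.mem_filter.mpr haf)
    · apply Finset.le_min'
      intro y hy
      rw [ha, Finset.mem_singleton] at hy
      omega
  have hn : nVal d I = a - d := by
    rw [nVal, dif_pos hne, hmin]
  refine ⟨by omega, by omega, ?_⟩
  rw [ha, hn, show d + (a - d) = a by omega]

theorem erase_lamPart {k : ℕ} {I : Finset ℕ} (hI : IdxOk d g lam k I)
    (hne : (I.filter fun i => d + 1 ≤ i).Nonempty) :
    I.erase (d + nVal d I) = I.filter fun i => ¬ d + 1 ≤ i := by
  obtain ⟨-, -, heq⟩ := lamPart_eq hI hne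
  ext i
  rw [Finset.mem_erase, Finset.mem_filter]
  constructor
  · rintro ⟨hne', hi⟩
    refine ⟨hi, fun hle => hne' ?_⟩
    have : i ∈ I.filter fun i => d + 1 ≤ i := Finset.mem_filter.mpr ⟨hi, hle⟩
    rw [heq, Finset.mem_singleton] at this
    exact this
  · rintro ⟨hi, hnle⟩
    refine ⟨fun hc => hnle ?_, hi⟩
    have : d + nVal d I ∈ I.filter fun i => d + 1 ≤ i := heq ▸ Finset.mem_singleton_self _
    rw [Finset.mem_filter] at this
    omega

theorem ePart_subset {k : ℕ} {I : Finset ℕ} (hI : IdxOk d g lam k I) :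
    (I.filter fun i => ¬ d + 1 ≤ i) ⊆ Finset.Icc 1 d := by
  intro i hi
  rw [Finset.mem_filter] at hi
  have := Finset.mem_Icc.mp (hI.2.1 hi.1)
  rw [Finset.mem_Icc]
  omega

theorem ePart_card {k : ℕ} {I : Finset ℕ} (hI : IdxOk d g lam k I)
    (hne : (I.filter fun i => d + 1 ≤ i).Nonempty) :
    (I.filter fun i => ¬ d + 1 ≤ i).card + 1 = k := by
  obtain ⟨-, -, heq⟩ := lamPart_eq hI hne
  have hPS : (I.filter fun i => d + 1 ≤ i).card + (I.filter fun i => ¬ d + 1 ≤ i).card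
      = I.card := by
    have := Finset.card_filter_add_card_filter_not (s := I) (p := fun i => d + 1 ≤ i)
    simpa using this
  rw [heq] at hPS
  simp only [Finset.card_singleton] at hPS
  have := hI.1
  omega

theorem subset_Icc_of_lamPart_empty {k : ℕ} {I : Finset ℕ} (hI : IdxOk d g lam k I)
    (hemp : (I.filter fun i => d + 1 ≤ i) = ∅) : I ⊆ Finset.Icc 1 d := by
  intro i hi
  have h1 := Finset.mem_Icc.mp (hI.2.1 hi)
  have h2 : i ∉ I.filter fun i => d + 1 ≤ i := by rw [hemp]; exact Finset.notMem_empty i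
  rw [Finset.mem_filter] at h2
  rw [Finset.mem_Icc]
  push_neg at h2
  have := h2 hi
  omega

/-- The set defining `mVal` has at most one element. -/
theorem D_card_le_one {k : ℕ} {I : Finset ℕ} (hI : IdxOk d g lam k I) :
    ((((Finset.Icc 1 d).filter fun i => E d lam i ∈ spanOf d lam I)) \ I).card ≤ 1 := by
  by_contra hlt
  push_neg at hlt
  obtain ⟨i, hi, i', hi', hne⟩ := Finset.one_lt_card.mp hlt
  rw [Finset.mem_sdiff, Finset.mem_filter] at hi hi'
  set S := I.filter fun i => ¬ d + 1 ≤ i with hS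
  have hSsub : S ⊆ I := Finset.filter_subset _ _
  have hiS : i ∉ S := fun h => hi.2 (hSsub h)
  have hi'S : i' ∉ S := fun h => hi'.2 (hSsub h)
  set X := insert i (insert i' S) with hX
  have hXcard : X.card = S.card + 2 := by
    rw [hX, Finset.card_insert_of_notMem (by
      rw [Finset.mem_insert]; push_neg; exact ⟨hne, hiS⟩),
      Finset.card_insert_of_notMem hi'S]
  have hXsub : X ⊆ Finset.Icc 1 d := by
    intro x hx
    rw [hX, Finset.mem_insert, Finset.mem_insert] at hx
    rcases hx with rfl | rfl | hx
    · exact hi.1.1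
    · exact hi'.1.1
    · exact ePart_subset hI hx
  have hsp : ∀ x ∈ X, E d lam x ∈ spanOf d lam I := by
    intro x hx
    rw [hX, Finset.mem_insert, Finset.mem_insert] at hx
    rcases hx with rfl | rfl | hx
    · exact hi.1.2
    · exact hi'.1.2
    · exact mem_spanOf_of_mem (hSsub hx)
  have hcard := card_le_of_subset_span (li_e_subset hXsub) hsp
  have hPS : (I.filter fun i => d + 1 ≤ i).card + (I.filter fun i => ¬ d + 1 ≤ i).card
      = I.card := by
    have := Finset.card_filter_add_card_filter_not (s := I) (p := fun i => d + 1 ≤ i)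
    simpa using this
  rw [← hS] at hPS
  have := hI.2.2.1
  omega

theorem mVal_mem {I : Finset ℕ} (hm : mVal d lam I ≠ 0) :
    mVal d lam I ∈ (((Finset.Icc 1 d).filter fun i => E d lam i ∈ spanOf d lam I)) \ I := by
  rw [mVal] at hm ⊢
  split_ifs at hm ⊢ with h
  · exact Finset.min'_mem _ h
  · exact absurd rfl hm

theorem D_eq_singleton {k : ℕ} {I : Finset ℕ} (hI : IdxOk d g lam k I)
    (hm : mVal d lam I ≠ 0) :
    (((Finset.Icc 1 d).filter fun i => E d lam i ∈ spanOf d lam I)) \ I = {mVal d lam I} := by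
  have hmem := mVal_mem hm
  have hcard := D_card_le_one hI
  have h1 : 1 ≤ ((((Finset.Icc 1 d).filter fun i => E d lam i ∈ spanOf d lam I)) \ I).card :=
    Finset.card_pos.mpr ⟨_, hmem⟩
  obtain ⟨a, ha⟩ := Finset.card_eq_one.mp (le_antisymm hcard h1)
  rw [ha] at hmem ⊢
  rw [Finset.mem_singleton] at hmem
  rw [hmem]

/-- If `mVal ≠ 0` then the `λ`-part of `I` is nonempty. -/
theorem lamPart_nonempty_of_mVal {k : ℕ} {I : Finset ℕ} (hI : IdxOk d g lam k I)
    (hm : mVal d lam I ≠ 0) : (I.filter fun i => d + 1 ≤ i).Nonempty := by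
  rw [Finset.nonempty_iff_ne_empty]
  intro hemp
  have hmem := mVal_mem hm
  rw [Finset.mem_sdiff, Finset.mem_filter] at hmem
  have hIcc := subset_Icc_of_lamPart_empty hI hemp
  have hXsub : insert (mVal d lam I) I ⊆ Finset.Icc 1 d :=
    Finset.insert_subset hmem.1.1 hIcc
  have hsp : ∀ x ∈ insert (mVal d lam I) I, E d lam x ∈ spanOf d lam I := by
    intro x hx
    rcases Finset.mem_insert.mp hx with rfl | hx
    · exact hmem.1.2
    · exact mem_spanOf_of_mem hx
  have hcard := card_le_of_subset_span (li_e_subset hXsub) hsp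
  rw [Finset.card_insert_of_notMem hmem.2] at hcard
  omega

theorem tVal_facts {I : Finset ℕ} (ht : tVal d g lam I ≠ g + 1) :
    tVal d g lam I ∈ Finset.Icc 1 g ∧ lam (tVal d g lam I) ∉ spanOf d lam I := by
  rw [tVal] at ht ⊢
  split_ifs at ht ⊢ with h
  · have := Finset.min'_mem _ h
    rw [Finset.mem_filter] at this
    exact ⟨this.1, this.2⟩
  · exact absurd rfl ht

theorem tVal_le {I : Finset ℕ} {q : ℕ} (hq : q ∈ Finset.Icc 1 g)
    (hsp : lam q ∉ spanOf d lam I) : tVal d g lam I ≤ q := by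
  have hne : ((Finset.Icc 1 g).filter fun j => lam j ∉ spanOf d lam I).Nonempty :=
    ⟨q, Finset.mem_filter.mpr ⟨hq, hsp⟩⟩
  rw [tVal, dif_pos hne]
  exact Finset.min'_le _ _ (Finset.mem_filter.mpr ⟨hq, hsp⟩)

end Aux5
section Aux6
set_option maxHeartbeats 1000000

open Finset Submodule

variable {d g : ℕ} {lam : ℕ → Fin d → ℚ} {ν : Fin d → ℚ}

theorem I_eq_insert {k : ℕ} {I : Finset ℕ} (hI : IdxOk d g lam k I)
    (hne : (I.filter fun i => d + 1 ≤ i).Nonempty) :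
    I = insert (d + nVal d I) (I.filter fun i => ¬ d + 1 ≤ i) := by
  obtain ⟨-, -, heq⟩ := lamPart_eq hI hne
  have hmem : d + nVal d I ∈ I := by
    have : d + nVal d I ∈ I.filter fun i => d + 1 ≤ i := heq ▸ Finset.mem_singleton_self _
    exact (Finset.mem_filter.mp this).1
  ext i
  rw [Finset.mem_insert, Finset.mem_filter]
  constructor
  · intro hi
    by_cases hle : d + 1 ≤ i
    · left
      have : i ∈ I.filter fun i => d + 1 ≤ i := Finset.mem_filter.mpr ⟨hi, hle⟩
      rw [heq, Finset.mem_singleton] at this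
      exact this
    · exact Or.inr ⟨hi, hle⟩
  · rintro (rfl | ⟨hi, -⟩)
    · exact hmem
    · exact hi

theorem span_eq_of_m {k : ℕ} {I : Finset ℕ} (hI : IdxOk d g lam k I)
    (hne : (I.filter fun i => d + 1 ≤ i).Nonempty)
    {m : ℕ} (hm : m ∈ Finset.Icc 1 d) (hmI : m ∉ I)
    (hmsp : E d lam m ∈ spanOf d lam I) :
    spanOf d lam (insert m (I.filter fun i => ¬ d + 1 ≤ i)) = spanOf d lam I := by
  set S := I.filter fun i => ¬ d + 1 ≤ i with hS
  have hSsub : S ⊆ I := Finset.filter_subset _ _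
  have hmS : m ∉ S := fun h => hmI (hSsub h)
  have hIeq := I_eq_insert hI hne
  apply le_antisymm
  · apply spanOf_le_of_forall
    intro i hi
    rcases Finset.mem_insert.mp hi with rfl | hi
    · exact hmsp
    · exact mem_spanOf_of_mem (hSsub hi)
  · apply spanOf_le_of_forall
    intro i hi
    rw [hIeq, Finset.mem_insert] at hi
    rcases hi with rfl | hi
    · -- `E (d + n) ∈ spanOf (insert m S)` by the exchange lemma
      rw [spanOf_insert]
      apply mem_span_insert_exchange
      · rw [← Set.image_insert_eq, ← Finset.coe_insert]
        have : span ℚ ((fun i => E d lam i) '' ((insert (d + nVal d I) S : Finset ℕ) : Set ℕ))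
            = spanOf d lam I := by rw [← hIeq]; rfl
        rw [this]
        exact hmsp
      · exact li_not_mem_span hmS (li_e_subset (Finset.insert_subset hm (ePart_subset hI)))
    · exact mem_spanOf_of_mem (Finset.mem_insert_of_mem hi)

theorem idxok_b {k : ℕ} {I : Finset ℕ} (hI : IdxOk d g lam k I)
    (hm : mVal d lam I ≠ 0) (ht : tVal d g lam I ≠ g + 1) :
    nVal d I ≠ 0 ∧
      IdxOk d g lam (k + 1)
        (insert (mVal d lam I) (insert (d + tVal d g lam I) (I.erase (d + nVal d I)))) := by
  have hne := lamPart_nonempty_of_mVal hI hm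
  obtain ⟨hn1, hng, heq⟩ := lamPart_eq hI hne
  have hnne : nVal d I ≠ 0 := by omega
  have hSer := erase_lamPart hI hne
  set S := I.filter fun i => ¬ d + 1 ≤ i with hS
  have hSsub : S ⊆ I := Finset.filter_subset _ _
  have hSIcc : S ⊆ Finset.Icc 1 d := ePart_subset hI
  have hmmem := mVal_mem hm
  rw [Finset.mem_sdiff, Finset.mem_filter] at hmmem
  obtain ⟨⟨hmIcc, hmsp⟩, hmI⟩ := hmmem
  obtain ⟨htIcc, htsp⟩ := tVal_facts ht
  have hmd : mVal d lam I ≤ d := (Finset.mem_Icc.mp hmIcc).2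
  have ht1 : 1 ≤ tVal d g lam I := (Finset.mem_Icc.mp htIcc).1
  have htg : tVal d g lam I ≤ g := (Finset.mem_Icc.mp htIcc).2
  have hmS : mVal d lam I ∉ S := fun h => hmI (hSsub h)
  have hdtmS : d + tVal d g lam I ∉ insert (mVal d lam I) S := by
    intro h
    rcases Finset.mem_insert.mp h with h | h
    · omega
    · have := (Finset.mem_Icc.mp (hSIcc h)).2; omega
  have hspan := span_eq_of_m hI hne hmIcc hmI hmsp
  have hcardS : S.card + 1 = k := ePart_card hI hne
  refine ⟨hnne, ?_⟩
  rw [hSer, Finset.insert_comm]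
  have hliB : LinearIndependent ℚ
      (fun i : {x // x ∈ insert (d + tVal d g lam I) (insert (mVal d lam I) S)} =>
        E d lam i.1) := by
    apply li_insert (I := insert (mVal d lam I) S) hdtmS
      (li_e_subset (Finset.insert_subset hmIcc hSIcc))
    rw [E_lam ht1, hspan]
    exact htsp
  refine ⟨?_, ?_, ?_, hliB⟩
  · rw [Finset.card_insert_of_notMem hdtmS, Finset.card_insert_of_notMem hmS]
    omega
  · apply Finset.insert_subset
    · rw [Finset.mem_Icc]; omega
    · apply Finset.insert_subset
      · rw [Finset.mem_Icc] at hmIcc ⊢; omega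
      · exact fun i hi => hI.2.1 (hSsub hi)
  · have hfe : S.filter (fun i => d + 1 ≤ i) = ∅ := by
      rw [Finset.filter_eq_empty_iff]
      intro i hi
      have := (Finset.mem_Icc.mp (hSIcc hi)).2
      omega
    rw [Finset.filter_insert, if_pos (by omega : d + 1 ≤ d + tVal d g lam I),
      Finset.filter_insert, if_neg (by omega : ¬ d + 1 ≤ mVal d lam I), hfe]
    simp

theorem F_nonempty {k : ℕ} {I : Finset ℕ} (hI : IdxOk d g lam k I) (hkd : k + 1 ≤ d) :
    ((Finset.Icc 1 (d + g)).filter fun i => IdxOk d g lam (k + 1) (insert i I)).Nonempty := by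
  have hex : ¬ ∀ i ∈ Finset.Icc 1 d, E d lam i ∈ spanOf d lam I := by
    intro hall
    have := card_le_of_subset_span (li_e_subset (le_refl _)) hall
    rw [Nat.card_Icc] at this
    have := hI.1
    omega
  push_neg at hex
  obtain ⟨i₀, hIcc, hsp⟩ := hex
  have h1 := Finset.mem_Icc.mp hIcc
  have hok : IdxOk d g lam (k + 1) (insert i₀ I) := by
    apply idxok_insert hI (by rw [Finset.mem_Icc]; omega) hsp
    rw [Finset.filter_insert, if_neg (by omega : ¬ d + 1 ≤ i₀)]
    exact hI.2.2.1
  exact ⟨i₀, Finset.mem_filter.mpr ⟨by rw [Finset.mem_Icc]; omega, hok⟩⟩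

end Aux6
section Main
set_option maxHeartbeats 4000000

open Finset Submodule

variable {d g : ℕ} {lam : ℕ → Fin d → ℚ} {ν : Fin d → ℚ}

theorem W_succ {k : ℕ} (hk : 1 ≤ k) :
    W d g lam ν (k + 1) = step d g lam ν k (W d g lam ν k) := by
  cases k with
  | zero => omega
  | succ j => rfl

theorem main_aux (hd : 1 ≤ d) (hg : 1 ≤ g)
    (hmono : ∀ j, 1 ≤ j → j < g → ∀ i, lam j i ≤ lam (j + 1) i)
    (hnotin : ∀ j, 1 ≤ j → j ≤ g → lam j ∉ Mlat d lam (j - 1))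
    (hpos : ∀ i, 1 ≤ i → i ≤ d → 0 < pair d ν (E d lam i)) :
    ∀ k, 1 ≤ k → k ≤ d →
      IdxOk d g lam k (W d g lam ν k) ∧
        ∀ K, IdxOk d g lam k K →
          ∑ i ∈ W d g lam ν k, pair d ν (E d lam i) ≤ ∑ i ∈ K, pair d ν (E d lam i) := by
  intro k hk1
  induction k, hk1 using Nat.le_induction with
  | base =>
    intro hkd
    set S₀ : Finset ℕ := insert (d + 1) (Finset.Icc 1 d) with hS₀def
    have hS₀ : S₀.Nonempty := ⟨d + 1, Finset.mem_insert_self _ _⟩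
    obtain ⟨hℓmem, hℓle⟩ := leastIdx_spec (d := d) (lam := lam) (ν := ν) hS₀
    set ℓ := leastIdx d lam ν S₀ with hℓdef
    have hWeq : W d g lam ν 1 = {ℓ} := rfl
    have hℓbound : 1 ≤ ℓ ∧ ℓ ≤ d + 1 := by
      rcases Finset.mem_insert.mp hℓmem with h | h
      · omega
      · have := Finset.mem_Icc.mp h; omega
    have hE0 : E d lam ℓ ≠ 0 := by
      rcases Finset.mem_insert.mp hℓmem with h | h
      · rw [h, show d + 1 = d + 1 from rfl, E_lam le_rfl]
        exact lam_ne_zero hnotin le_rfl hg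
      · have hb := Finset.mem_Icc.mp h
        rw [E_e hb.1 hb.2]
        intro hc
        have := congrFun hc ⟨ℓ - 1, by omega⟩
        simp at this
    have hok : IdxOk d g lam 1 {ℓ} := by
      refine ⟨Finset.card_singleton ℓ, ?_, ?_, ?_⟩
      · rw [Finset.singleton_subset_iff, Finset.mem_Icc]
        omega
      · exact le_trans (Finset.card_filter_le _ _) (le_of_eq (Finset.card_singleton ℓ))
      · have hempty : LinearIndependent ℚ (fun i : {x // x ∈ (∅ : Finset ℕ)} => E d lam i.1) := by
          haveI : IsEmpty {x // x ∈ (∅ : Finset ℕ)} :=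
            ⟨fun x => Finset.notMem_empty x.1 x.2⟩
          exact linearIndependent_empty_type
        have hsp : E d lam ℓ ∉ spanOf d lam (∅ : Finset ℕ) := by
          rw [spanOf, Finset.coe_empty, Set.image_empty, Submodule.span_empty,
            Submodule.mem_bot]
          exact hE0
        have := li_insert (Finset.notMem_empty ℓ) hempty hsp
        simpa using this
    rw [hWeq]
    refine ⟨hok, ?_⟩
    intro K hK
    obtain ⟨x, rfl⟩ := Finset.card_eq_one.mp hK.1
    have hxIcc := Finset.mem_Icc.mp (hK.2.1 (Finset.mem_singleton_self x))
    rw [Finset.sum_singleton, Finset.sum_singleton]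
    by_cases hxd : x ≤ d
    · exact hℓle x (Finset.mem_insert_of_mem (Finset.mem_Icc.mpr ⟨hxIcc.1, hxd⟩))
    · have hq : x = d + (x - d) := by omega
      have hq1 : 1 ≤ x - d := by omega
      have hqg : x - d ≤ g := by omega
      have h1 : pair d ν (E d lam ℓ) ≤ pair d ν (E d lam (d + 1)) :=
        hℓle (d + 1) (Finset.mem_insert_self _ _)
      rw [E_lam le_rfl] at h1
      refine le_trans h1 ?_
      rw [hq, E_lam hq1]
      exact pair_lam_mono hpos hmono le_rfl hq1 hqg
  | succ k hk1 ih =>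
    intro hkd
    obtain ⟨hIok, hImin⟩ := ih (by omega)
    set I := W d g lam ν k with hIdef
    -- the candidate a
    have hF := F_nonempty hIok hkd
    obtain ⟨hiFmem, hiFle⟩ := leastIdx_spec (d := d) (lam := lam) (ν := ν) hF
    have hiV : iVal d g lam ν k I = leastIdx d lam ν
        ((Finset.Icc 1 (d + g)).filter fun i => IdxOk d g lam (k + 1) (insert i I)) := rfl
    rw [← hiV] at hiFmem hiFle
    rw [Finset.mem_filter] at hiFmem
    have hAok : IdxOk d g lam (k + 1) (insert (iVal d g lam ν k I) I) := hiFmem.2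
    have hiVnotI : iVal d g lam ν k I ∉ I := by
      intro h
      have h1 := hAok.1
      rw [Finset.insert_eq_self.mpr h] at h1
      have := hIok.1
      omega
    have hsuma : ∑ i ∈ insert (iVal d g lam ν k I) I, pair d ν (E d lam i)
        = pair d ν (E d lam (iVal d g lam ν k I)) + ∑ i ∈ I, pair d ν (E d lam i) :=
      Finset.sum_insert hiVnotI
    -- the main bound
    have hbound : ∀ K, IdxOk d g lam (k + 1) K →
        (∑ i ∈ insert (iVal d g lam ν k I) I, pair d ν (E d lam i)
            ≤ ∑ i ∈ K, pair d ν (E d lam i)) ∨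
          (mVal d lam I ≠ 0 ∧ tVal d g lam I ≠ g + 1 ∧
            ∑ i ∈ insert (mVal d lam I)
                (insert (d + tVal d g lam I) (I.erase (d + nVal d I))), pair d ν (E d lam i)
              ≤ ∑ i ∈ K, pair d ν (E d lam i)) := by
      intro K hK
      -- there is an element of K outside the span of I
      have hex : ∃ x ∈ K, E d lam x ∉ spanOf d lam I := by
        by_contra h
        push_neg at h
        have := card_le_of_subset_span hK.2.2.2 h
        have h1 := hK.1
        have h2 := hIok.1
        omega
      -- bound via candidate a, applicable whenever some element of K can be inserted into I
      have hboundA : ∀ x ∈ K, IdxOk d g lam (k + 1) (insert x I) →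
          ∑ i ∈ insert (iVal d g lam ν k I) I, pair d ν (E d lam i)
            ≤ ∑ i ∈ K, pair d ν (E d lam i) := by
        intro x hxK hxok
        have hxIcc : x ∈ Finset.Icc 1 (d + g) := hK.2.1 hxK
        have hxF : x ∈ (Finset.Icc 1 (d + g)).filter
            fun i => IdxOk d g lam (k + 1) (insert i I) :=
          Finset.mem_filter.mpr ⟨hxIcc, hxok⟩
        have h1 := hiFle x hxF
        have h2 : IdxOk d g lam k (K.erase x) := idxok_erase hK hxK
        have h3 := hImin _ h2
        have h4 : ∑ i ∈ K.erase x, pair d ν (E d lam i) + pair d ν (E d lam x)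
            = ∑ i ∈ K, pair d ν (E d lam i) := Finset.sum_erase_add K _ hxK
        rw [hsuma, ← h4]
        exact add_le_add h1 h3 |>.trans_eq (add_comm _ _) |>.trans_eq rfl
      obtain ⟨x, hxK, hxsp⟩ := hex
      have hxIcc := Finset.mem_Icc.mp (hK.2.1 hxK)
      have hxnotI : x ∉ I := fun h => hxsp (mem_spanOf_of_mem h)
      by_cases hxe : ∃ y ∈ K, y ≤ d ∧ E d lam y ∉ spanOf d lam I
      · obtain ⟨y, hyK, hyd, hysp⟩ := hxe
        have hyIcc := Finset.mem_Icc.mp (hK.2.1 hyK)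
        left
        apply hboundA y hyK
        apply idxok_insert hIok (by rw [Finset.mem_Icc]; omega) hysp
        rw [Finset.filter_insert, if_neg (by omega : ¬ d + 1 ≤ y)]
        exact hIok.2.2.1
      · push_neg at hxe
        have hxd : d + 1 ≤ x := by
          by_contra h
          exact hxsp (hxe x hxK (by omega))
        by_cases hP : (I.filter fun i => d + 1 ≤ i) = ∅
        · left
          apply hboundA x hxK
          apply idxok_insert hIok (by rw [Finset.mem_Icc]; omega) hxsp
          rw [Finset.filter_insert, if_pos (by omega : d + 1 ≤ x), hP]
          simp
        · -- the exchange case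
          have hne : (I.filter fun i => d + 1 ≤ i).Nonempty :=
            Finset.nonempty_iff_ne_empty.mpr hP
          have hq1 : 1 ≤ x - d := by omega
          have hqg : x - d ≤ g := by omega
          have hxeq : x = d + (x - d) := by omega
          have hElamq : E d lam x = lam (x - d) := by
            nth_rewrite 1 [hxeq]
            exact E_lam hq1
          -- K's λ-part is exactly {x}
          have hKfil : K.filter (fun i => d + 1 ≤ i) = {x} := by
            apply Finset.eq_singleton_iff_unique_mem.mpr
            refine ⟨Finset.mem_filter.mpr ⟨hxK, hxd⟩, fun y hy => ?_⟩
            exact Finset.card_le_one.mp hK.2.2.1 y hy x (Finset.mem_filter.mpr ⟨hxK, hxd⟩)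
          have hT : K.erase x = K.filter fun i => ¬ d + 1 ≤ i := by
            ext i
            rw [Finset.mem_erase, Finset.mem_filter]
            constructor
            · rintro ⟨hne', hi⟩
              refine ⟨hi, fun hle => hne' ?_⟩
              have : i ∈ K.filter fun i => d + 1 ≤ i := Finset.mem_filter.mpr ⟨hi, hle⟩
              rw [hKfil, Finset.mem_singleton] at this
              exact this
            · rintro ⟨hi, hnle⟩
              exact ⟨fun hc => hnle (hc ▸ hxd), hi⟩
          set T := K.filter (fun i => ¬ d + 1 ≤ i) with hTdef
          have hTIcc : T ⊆ Finset.Icc 1 d := ePart_subset hK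
          have hTK : T ⊆ K := Finset.filter_subset _ _
          have hTsp : ∀ y ∈ T, E d lam y ∈ spanOf d lam I := by
            intro y hy
            have hyd : y ≤ d := (Finset.mem_Icc.mp (hTIcc hy)).2
            by_contra hc
            exact hc (hxe y (hTK hy) hyd)
          have hTcard : T.card + 1 = k + 1 := ePart_card hK ⟨x, Finset.mem_filter.mpr ⟨hxK, hxd⟩⟩
          set S := I.filter (fun i => ¬ d + 1 ≤ i) with hSdef
          have hScard : S.card + 1 = k := ePart_card hIok hne
          set D := ((Finset.Icc 1 d).filter fun i => E d lam i ∈ spanOf d lam I) \ I with hDdef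
          have hTSD : T ⊆ S ∪ D := by
            intro y hy
            rw [Finset.mem_union]
            by_cases hyI : y ∈ I
            · left
              rw [hSdef, Finset.mem_filter]
              have hyd : y ≤ d := (Finset.mem_Icc.mp (hTIcc hy)).2
              exact ⟨hyI, by omega⟩
            · right
              rw [hDdef, Finset.mem_sdiff, Finset.mem_filter]
              exact ⟨⟨hTIcc hy, hTsp y hy⟩, hyI⟩
          have hDne : D.Nonempty := by
            rw [Finset.nonempty_iff_ne_empty]
            intro hDemp
            rw [hDemp, Finset.union_empty] at hTSD
            have := Finset.card_le_card hTSD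
            omega
          have hDne' : (((Finset.Icc 1 d).filter fun i => E d lam i ∈ spanOf d lam I) \
              I).Nonempty := hDne
          have hmD : mVal d lam I ∈ D := by
            have : mVal d lam I = (((Finset.Icc 1 d).filter
                fun i => E d lam i ∈ spanOf d lam I) \ I).min' hDne' := by
              unfold mVal
              rw [dif_pos hDne']
            rw [this]
            exact Finset.min'_mem _ _
          have hmfacts : mVal d lam I ∈ Finset.Icc 1 d ∧
              E d lam (mVal d lam I) ∈ spanOf d lam I ∧ mVal d lam I ∉ I := by
            have := hmD
            rw [hDdef, Finset.mem_sdiff, Finset.mem_filter] at this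
            exact ⟨this.1.1, this.1.2, this.2⟩
          have hm0 : mVal d lam I ≠ 0 := by
            have := Finset.mem_Icc.mp hmfacts.1; omega
          have hDsing : D = {mVal d lam I} := D_eq_singleton hIok hm0
          have hmnotS : mVal d lam I ∉ S := fun h => hmfacts.2.2 (Finset.filter_subset _ _ h)
          have hTeq : T = insert (mVal d lam I) S := by
            apply Finset.eq_of_subset_of_card_le
            · intro y hy
              rcases Finset.mem_union.mp (hTSD hy) with h | h
              · exact Finset.mem_insert_of_mem h
              · rw [hDsing, Finset.mem_singleton] at h
                rw [h]
                exact Finset.mem_insert_self _ _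
            · rw [Finset.card_insert_of_notMem hmnotS]
              omega
          -- tVal facts
          have hqsp : lam (x - d) ∉ spanOf d lam I := hElamq ▸ hxsp
          have htle : tVal d g lam I ≤ x - d := tVal_le (Finset.mem_Icc.mpr ⟨hq1, hqg⟩) hqsp
          have ht0 : tVal d g lam I ≠ g + 1 := by omega
          obtain ⟨htIcc, htsp⟩ := tVal_facts ht0
          have ht1 : 1 ≤ tVal d g lam I := (Finset.mem_Icc.mp htIcc).1
          right
          refine ⟨hm0, ht0, ?_⟩
          rw [erase_lamPart hIok hne, ← hSdef]
          -- value computation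
          have hmd : mVal d lam I ≤ d := (Finset.mem_Icc.mp hmfacts.1).2
          have hdtS : d + tVal d g lam I ∉ S := by
            intro h
            have := (Finset.mem_Icc.mp (ePart_subset hIok h)).2
            omega
          have hmins : mVal d lam I ∉ insert (d + tVal d g lam I) S := by
            rw [Finset.mem_insert]
            push_neg
            exact ⟨by omega, hmnotS⟩
          rw [Finset.sum_insert hmins, Finset.sum_insert hdtS]
          have hvalK : ∑ i ∈ K, pair d ν (E d lam i)
              = pair d ν (E d lam x) + ∑ i ∈ T, pair d ν (E d lam i) := by
            rw [← Finset.sum_erase_add K _ hxK, hT, add_comm]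
          have hvalT : ∑ i ∈ T, pair d ν (E d lam i)
              = pair d ν (E d lam (mVal d lam I)) + ∑ i ∈ S, pair d ν (E d lam i) := by
            rw [hTeq, Finset.sum_insert hmnotS]
          have hvx : pair d ν (E d lam (d + tVal d g lam I)) ≤ pair d ν (E d lam x) := by
            rw [E_lam ht1, hElamq]
            exact pair_lam_mono hpos hmono ht1 htle hqg
          rw [hvalK, hvalT]
          linarith
    -- now split on the branches of `step`
    have hWs : W d g lam ν (k + 1) = step d g lam ν k I := W_succ hk1
    rw [hWs, step]
    by_cases h1 : mVal d lam I = 0 ∨ tVal d g lam I = g + 1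
    · rw [if_pos h1]
      refine ⟨hAok, fun K hK => ?_⟩
      rcases hbound K hK with h | ⟨hm, ht, -⟩
      · exact h
      · rcases h1 with h1 | h1
        · exact absurd h1 hm
        · exact absurd h1 ht
    · have h1' := h1
      push_neg at h1'
      obtain ⟨hnne, hBok⟩ := idxok_b hIok h1'.1 h1'.2
      rw [if_neg h1, if_neg hnne]
      by_cases h2 : pair d ν (∑ i ∈ insert (iVal d g lam ν k I) I, E d lam i)
          ≤ pair d ν (∑ i ∈ insert (mVal d lam I)
              (insert (d + tVal d g lam I) (I.erase (d + nVal d I))), E d lam i)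
      · rw [if_pos h2]
        refine ⟨hAok, fun K hK => ?_⟩
        rcases hbound K hK with h | ⟨-, -, hb⟩
        · exact h
        · calc ∑ i ∈ insert (iVal d g lam ν k I) I, pair d ν (E d lam i)
              = pair d ν (∑ i ∈ insert (iVal d g lam ν k I) I, E d lam i) :=
                (pair_sumE ν _).symm
            _ ≤ pair d ν (∑ i ∈ insert (mVal d lam I)
                  (insert (d + tVal d g lam I) (I.erase (d + nVal d I))), E d lam i) := h2
            _ = ∑ i ∈ insert (mVal d lam I)
                  (insert (d + tVal d g lam I) (I.erase (d + nVal d I))),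
                    pair d ν (E d lam i) := pair_sumE ν _
            _ ≤ ∑ i ∈ K, pair d ν (E d lam i) := hb
      · rw [if_neg h2]
        refine ⟨hBok, fun K hK => ?_⟩
        rcases hbound K hK with h | ⟨-, -, hb⟩
        · push_neg at h2
          have h2' : ∑ i ∈ insert (mVal d lam I)
                (insert (d + tVal d g lam I) (I.erase (d + nVal d I))), pair d ν (E d lam i)
              ≤ ∑ i ∈ insert (iVal d g lam ν k I) I, pair d ν (E d lam i) := by
            rw [val_eq_pair, val_eq_pair]
            exact le_of_lt h2
          exact le_trans h2' h
        · exact hb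

end Main
/-- For every `ν ∈ N` with `⟨ν, e_i⟩ > 0` for all `1 ≤ i ≤ d` and every `1 ≤ k ≤ d`,
the vector `w_k` produced by the recursive algorithm belongs to the finite set `J_k` and
computes the support function of the `k`-th logarithmic jacobian ideal at `ν`, that is,
`⟨ν, w_k⟩ = ord_{J_k}(ν) = min_{w ∈ J_k} ⟨ν, w⟩`. -/
theorem statement0 (d g : ℕ) (lam : ℕ → Fin d → ℚ) (hd : 1 ≤ d) (hg : 1 ≤ g)
    (hnn : ∀ j, 1 ≤ j → j ≤ g → ∀ i, 0 ≤ lam j i)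
    (hmono : ∀ j, 1 ≤ j → j < g → ∀ i, lam j i ≤ lam (j + 1) i)
    (hnotin : ∀ j, 1 ≤ j → j ≤ g → lam j ∉ Mlat d lam (j - 1))
    (ν : Fin d → ℚ) (hν : ν ∈ Ndual d g lam)
    (hpos : ∀ i, 1 ≤ i → i ≤ d → 0 < pair d ν (E d lam i))
    (k : ℕ) (hk1 : 1 ≤ k) (hkd : k ≤ d) :
    wVec d g lam ν k ∈ Jset d g lam k ∧
      pair d ν (wVec d g lam ν k) = ordJ d g lam k ν ∧
      ∀ w ∈ Jset d g lam k, pair d ν (wVec d g lam ν k) ≤ pair d ν w := by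
  obtain ⟨hok, hmin⟩ := main_aux hd hg hmono hnotin hpos k hk1 hkd
  have hmemJ : wVec d g lam ν k ∈ Jset d g lam k := ⟨W d g lam ν k, hok, rfl⟩
  have hminJ : ∀ w ∈ Jset d g lam k, pair d ν (wVec d g lam ν k) ≤ pair d ν w := by
    rintro w ⟨K, hKok, rfl⟩
    rw [wVec, pair_sumE, pair_sumE]
    exact hmin K hKok
  refine ⟨hmemJ, ?_, hminJ⟩
  have hJfin_mem : ∀ {w : Fin d → ℚ}, w ∈ Jfin d g lam k ↔ w ∈ Jset d g lam k := by
    intro w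
    rw [Jfin, Finset.mem_image]
    constructor
    · rintro ⟨I, hI, rfl⟩
      rw [Finset.mem_filter] at hI
      exact ⟨I, hI.2, rfl⟩
    · rintro ⟨I, hIok, rfl⟩
      exact ⟨I, Finset.mem_filter.mpr
        ⟨Finset.mem_powerset.mpr hIok.2.1, hIok⟩, rfl⟩
  have hne : (Jfin d g lam k).Nonempty := ⟨wVec d g lam ν k, hJfin_mem.mpr hmemJ⟩
  rw [ordJ, dif_pos hne]
  apply le_antisymm
  · exact Finset.le_min' _ _ _ (fun y hy => by
      obtain ⟨w, hw, rfl⟩ := Finset.mem_image.mp hy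
      exact hminJ w (hJfin_mem.mp hw))
  · exact Finset.min'_le _ _ (Finset.mem_image_of_mem _ (hJfin_mem.mpr hmemJ))

end QO
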